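/- Let γ ≥ 0 and let f, F : ℝ → ℝ be everywhere positive functions, both differentiable at a point a ∈ ℝ. Suppose that for all a₁, a₂ ∈ ℝ, exp(−γ·|a₁ − a₂|) ≤ (f(a₂)·F(a₁)) / (f(a₁)·F(a₂)) ≤ exp(γ·|a₁ − a₂|). Then F′(a)/F(a) − γ ≤ f′(a)/f(a) ≤ F′(a)/F(a) + γ. -/
import Mathlib

open Real Filter

/-- If `L` is pointwise γ-Lipschitz around `a` and has derivative `d` at `a`,
then `|d| ≤ γ`. -/
lemma abs_deriv_le_of_lipschitz_at {L : ℝ → ℝ} {a d γ : ℝ}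
    (hd : HasDerivAt L d a) (h : ∀ x, |L x - L a| ≤ γ * |x - a|) : |d| ≤ γ := by
  have ht : Tendsto (slope L a) (nhdsWithin a {a}ᶜ) (nhds d) :=
    hasDerivAt_iff_tendsto_slope.mp hd
  have ht' : Tendsto (fun x => |slope L a x|) (nhdsWithin a {a}ᶜ) (nhds |d|) :=
    ht.abs
  refine le_of_tendsto ht' ?_
  filter_upwards [self_mem_nhdsWithin] with x hx
  have hxa : x ≠ a := hx
  have hne : x - a ≠ 0 := sub_ne_zero.mpr hxa
  rw [slope_def_field, div_eq_mul_inv, abs_mul, abs_inv]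
  rw [mul_inv_le_iff₀ (by positivity)]
  simpa [mul_comm] using h x

theorem marginal_sensitivity_score_bound
    (γ : ℝ) (hγ : 0 ≤ γ) (f F : ℝ → ℝ)
    (hf : ∀ x, 0 < f x) (hF : ∀ x, 0 < F x) (a : ℝ)
    (hfd : DifferentiableAt ℝ f a) (hFd : DifferentiableAt ℝ F a)
    (hmodel : ∀ a₁ a₂ : ℝ,
      Real.exp (-(γ * |a₁ - a₂|)) ≤ f a₂ * F a₁ / (f a₁ * F a₂) ∧
      f a₂ * F a₁ / (f a₁ * F a₂) ≤ Real.exp (γ * |a₁ - a₂|)) :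
    deriv F a / F a - γ ≤ deriv f a / f a ∧
      deriv f a / f a ≤ deriv F a / F a + γ := by
  set L : ℝ → ℝ := fun x => Real.log (f x) - Real.log (F x) with hL
  have hd : HasDerivAt L (deriv f a / f a - deriv F a / F a) a :=
    (hfd.hasDerivAt.log (hf a).ne').sub (hFd.hasDerivAt.log (hF a).ne')
  have hlip : ∀ x, |L x - L a| ≤ γ * |x - a| := by
    intro x
    have hR : 0 < f x * F a / (f a * F x) := div_pos (mul_pos (hf x) (hF a)) (mul_pos (hf a) (hF x))
    have h1 := (hmodel a x).1
    have h2 := (hmodel a x).2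
    have hlog2 : Real.log (f x * F a / (f a * F x)) ≤ γ * |a - x| := by
      calc Real.log (f x * F a / (f a * F x)) ≤ Real.log (Real.exp (γ * |a - x|)) :=
            Real.log_le_log hR h2
        _ = γ * |a - x| := Real.log_exp _
    have hlog1 : -(γ * |a - x|) ≤ Real.log (f x * F a / (f a * F x)) := by
      calc -(γ * |a - x|) = Real.log (Real.exp (-(γ * |a - x|))) := (Real.log_exp _).symm
        _ ≤ Real.log (f x * F a / (f a * F x)) :=
            Real.log_le_log (Real.exp_pos _) h1
    have heq : Real.log (f x * F a / (f a * F x)) = L x - L a := by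
      rw [Real.log_div (mul_pos (hf x) (hF a)).ne' (mul_pos (hf a) (hF x)).ne',
        Real.log_mul (hf x).ne' (hF a).ne', Real.log_mul (hf a).ne' (hF x).ne']
      simp [hL]; ring
    rw [heq] at hlog1 hlog2
    rw [abs_sub_comm a x] at hlog1 hlog2
    exact abs_le.mpr ⟨hlog1, hlog2⟩
  have habs := abs_deriv_le_of_lipschitz_at hd hlip
  rw [abs_le] at habs
  constructor <;> linarith [habs.1, habs.2]
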